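/- Let r, K, mu1, mu2, b2 > 0, and let g, h : ℝ × ℝ → ℝ and delta : ℝ × ℝ → ℝ be continuously differentiable. Define F : ℝ³ → ℝ³ by F(R,P1,P2) = ( r·(1−R/K)·R − g(R,P2)·delta(P1,P2), −mu1·P1, b2·h(R,P2)·P2 − mu2·P2 ). Then the (complex) eigenvalues of the Jacobian matrix of F at the point (K,0,0) are exactly −r − (∂g/∂R)(K,0)·delta(0,0), −mu1, and b2·h(K,0) − mu2. In particular, if (∂g/∂R)(K,0)·delta(0,0) ≥ 0 and mu2 > b2·h(K,0), then all eigenvalues of the Jacobian at (K,0,0) have negative real part. -/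

import Mathlib

/-- Eigenvalues of the Jacobian of the τ = 0 predator–prey vector field at the
    prey-only equilibrium `(K,0,0)` are exactly `−r − g_R(K,0)·δ(0,0)`, `−μ₁`
    and `b₂ h(K,0) − μ₂`; in particular if `g_R(K,0)·δ(0,0) ≥ 0` and
    `μ₂ > b₂ h(K,0)` all eigenvalues have negative real part. -/
theorem prey_only_equilibrium_jacobian_spectrum
    (r K mu1 mu2 b2 : ℝ) (hr : 0 < r) (hK : 0 < K) (hmu1 : 0 < mu1)
    (hmu2 : 0 < mu2) (hb2 : 0 < b2)
    (g h delta : ℝ × ℝ → ℝ)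
    (hg : ContDiff ℝ 1 g) (hh : ContDiff ℝ 1 h) (hdelta : ContDiff ℝ 1 delta)
    (F : (Fin 3 → ℝ) → (Fin 3 → ℝ))
    (hF : ∀ x, F x = ![r * (1 - x 0 / K) * x 0 - g (x 0, x 2) * delta (x 1, x 2),
                       -mu1 * x 1,
                       b2 * h (x 0, x 2) * x 2 - mu2 * x 2])
    (J : Matrix (Fin 3) (Fin 3) ℝ)
    (hJ : ∀ i j, J i j = fderiv ℝ F ![K, 0, 0] (Pi.single j 1) i)
    (gR : ℝ × ℝ → ℝ) (hgR : ∀ q, gR q = fderiv ℝ g q (1, 0)) :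
    spectrum ℂ (J.map (algebraMap ℝ ℂ))
      = {((-r - gR (K, 0) * delta (0, 0) : ℝ) : ℂ), ((-mu1 : ℝ) : ℂ),
         ((b2 * h (K, 0) - mu2 : ℝ) : ℂ)} ∧
    ((0 ≤ gR (K, 0) * delta (0, 0) ∧ b2 * h (K, 0) < mu2) →
      ∀ z ∈ spectrum ℂ (J.map (algebraMap ℝ ℂ)), z.re < 0) := by
  have hK' : K ≠ 0 := ne_of_gt hK
  set p : Fin 3 → ℝ := ![K, 0, 0] with hp
  have hp0 : p 0 = K := rfl
  have hp1 : p 1 = (0 : ℝ) := rfl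
  have hp2 : p 2 = (0 : ℝ) := rfl
  -- projections
  set π0 : (Fin 3 → ℝ) →L[ℝ] ℝ := ContinuousLinearMap.proj 0 with hπ0
  set π1 : (Fin 3 → ℝ) →L[ℝ] ℝ := ContinuousLinearMap.proj 1 with hπ1
  set π2 : (Fin 3 → ℝ) →L[ℝ] ℝ := ContinuousLinearMap.proj 2 with hπ2
  set L02 : (Fin 3 → ℝ) →L[ℝ] (ℝ × ℝ) := π0.prod π2 with hL02
  set L12 : (Fin 3 → ℝ) →L[ℝ] (ℝ × ℝ) := π1.prod π2 with hL12
  set A : (ℝ × ℝ) →L[ℝ] ℝ := fderiv ℝ g (K, 0) with hA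
  set B : (ℝ × ℝ) →L[ℝ] ℝ := fderiv ℝ delta (0, 0) with hB
  set Dh : (ℝ × ℝ) →L[ℝ] ℝ := fderiv ℝ h (K, 0) with hDh
  have hgd : HasFDerivAt g A (K, 0) :=
    ((hg.differentiable one_ne_zero) (K, 0)).hasFDerivAt
  have hdd : HasFDerivAt delta B (0, 0) :=
    ((hdelta.differentiable one_ne_zero) (0, 0)).hasFDerivAt
  have hhd : HasFDerivAt h Dh (K, 0) :=
    ((hh.differentiable one_ne_zero) (K, 0)).hasFDerivAt
  have hL02d : HasFDerivAt (fun x : Fin 3 → ℝ => (x 0, x 2)) L02 p := L02.hasFDerivAt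
  have hL12d : HasFDerivAt (fun x : Fin 3 → ℝ => (x 1, x 2)) L12 p := L12.hasFDerivAt
  -- component derivatives
  have hφ : HasDerivAt (fun t : ℝ => r * (1 - t / K) * t) (-r) K := by
    have h1 : HasDerivAt (fun t : ℝ => r * (1 - t / K)) (r * -(1 / K)) K :=
      (((hasDerivAt_id K).div_const K).const_sub 1).const_mul r
    have h2 := h1.mul (hasDerivAt_id K)
    refine h2.congr_deriv ?_
    simp only [id, div_self hK']
    field_simp
    ring
  have hf0a : HasFDerivAt (fun x : Fin 3 → ℝ => r * (1 - x 0 / K) * x 0)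
      ((-r) • π0) p := by
    have := (show HasDerivAt (fun t : ℝ => r * (1 - t / K) * t) (-r) (π0 p) from hφ).comp_hasFDerivAt p π0.hasFDerivAt
    exact this
  have hf0b : HasFDerivAt (fun x : Fin 3 → ℝ => g (x 0, x 2) * delta (x 1, x 2))
      (g (K, 0) • (B.comp L12) + delta (0, 0) • (A.comp L02)) p :=
    (hgd.comp p hL02d).mul (hdd.comp p hL12d)
  have hf0 : HasFDerivAt
      (fun x : Fin 3 → ℝ => r * (1 - x 0 / K) * x 0 - g (x 0, x 2) * delta (x 1, x 2))
      ((-r) • π0 - (g (K, 0) • (B.comp L12) + delta (0, 0) • (A.comp L02))) p :=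
    hf0a.sub hf0b
  have hf1 : HasFDerivAt (fun x : Fin 3 → ℝ => -mu1 * x 1) ((-mu1) • π1) p :=
    π1.hasFDerivAt.const_mul (-mu1)
  have hf2a : HasFDerivAt (fun x : Fin 3 → ℝ => b2 * h (x 0, x 2))
      (b2 • (Dh.comp L02)) p := (hhd.comp p hL02d).const_mul b2
  have hf2 : HasFDerivAt
      (fun x : Fin 3 → ℝ => b2 * h (x 0, x 2) * x 2 - mu2 * x 2)
      (((b2 * h (K, 0)) • π2 + (0 : ℝ) • (b2 • (Dh.comp L02))) - mu2 • π2) p :=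
    (hf2a.mul π2.hasFDerivAt).sub (π2.hasFDerivAt.const_mul mu2)
  -- assemble the full derivative
  set D : Fin 3 → ((Fin 3 → ℝ) →L[ℝ] ℝ) :=
    ![(-r) • π0 - (g (K, 0) • (B.comp L12) + delta (0, 0) • (A.comp L02)),
      (-mu1) • π1,
      ((b2 * h (K, 0)) • π2 + (0 : ℝ) • (b2 • (Dh.comp L02))) - mu2 • π2] with hD
  have hDF : HasFDerivAt F (ContinuousLinearMap.pi D) p := by
    rw [hasFDerivAt_pi']
    intro i
    rw [ContinuousLinearMap.proj_pi]
    fin_cases i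
    · simp only [hF, hD, Fin.isValue, Matrix.cons_val_zero]
      exact hf0
    · simp only [hF, hD, Fin.isValue, Matrix.cons_val_one, Matrix.head_cons]
      exact hf1
    · simp only [hF, hD, Fin.isValue, Matrix.cons_val_two, Matrix.tail_cons, Matrix.head_cons]
      exact hf2
  have hfd : fderiv ℝ F p = ContinuousLinearMap.pi D := hDF.fderiv
  have hJ' : ∀ i j, J i j = D i (Pi.single j 1) := by
    intro i j
    rw [hJ, hfd]
    simp [ContinuousLinearMap.pi_apply]
  have hB0 : B (0, 0) = 0 := by
    rw [show ((0 : ℝ), (0 : ℝ)) = (0 : ℝ × ℝ) from rfl, map_zero]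
  have e00 : J 0 0 = -r - gR (K, 0) * delta (0, 0) := by
    rw [hJ' 0 0, hD, hgR]
    simp only [Matrix.cons_val_zero, Matrix.cons_val_one, Matrix.head_cons,
      Matrix.cons_val_two, Matrix.tail_cons, ContinuousLinearMap.sub_apply,
      ContinuousLinearMap.add_apply, ContinuousLinearMap.smul_apply,
      ContinuousLinearMap.comp_apply, hL02, hL12, ContinuousLinearMap.prod_apply,
      hπ0, hπ1, hπ2, ContinuousLinearMap.proj_apply, smul_eq_mul, zero_smul,
      ContinuousLinearMap.zero_apply, zero_mul, add_zero]
    simp [Pi.single_apply, hB0, hA]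
    ring
  have e10 : J 1 0 = 0 := by
    rw [hJ' 1 0, hD]
    simp only [Matrix.cons_val_zero, Matrix.cons_val_one, Matrix.head_cons,
      Matrix.cons_val_two, Matrix.tail_cons, ContinuousLinearMap.sub_apply,
      ContinuousLinearMap.add_apply, ContinuousLinearMap.smul_apply,
      ContinuousLinearMap.comp_apply, hL02, hL12, ContinuousLinearMap.prod_apply,
      hπ0, hπ1, hπ2, ContinuousLinearMap.proj_apply, smul_eq_mul, zero_smul,
      ContinuousLinearMap.zero_apply, zero_mul, add_zero]
    simp [Pi.single_apply]
  have e11 : J 1 1 = -mu1 := by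
    rw [hJ' 1 1, hD]
    simp only [Matrix.cons_val_zero, Matrix.cons_val_one, Matrix.head_cons,
      Matrix.cons_val_two, Matrix.tail_cons, ContinuousLinearMap.sub_apply,
      ContinuousLinearMap.add_apply, ContinuousLinearMap.smul_apply,
      ContinuousLinearMap.comp_apply, hL02, hL12, ContinuousLinearMap.prod_apply,
      hπ0, hπ1, hπ2, ContinuousLinearMap.proj_apply, smul_eq_mul, zero_smul,
      ContinuousLinearMap.zero_apply, zero_mul, add_zero]
    simp [Pi.single_apply]
  have e12 : J 1 2 = 0 := by
    rw [hJ' 1 2, hD]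
    simp only [Matrix.cons_val_zero, Matrix.cons_val_one, Matrix.head_cons,
      Matrix.cons_val_two, Matrix.tail_cons, ContinuousLinearMap.sub_apply,
      ContinuousLinearMap.add_apply, ContinuousLinearMap.smul_apply,
      ContinuousLinearMap.comp_apply, hL02, hL12, ContinuousLinearMap.prod_apply,
      hπ0, hπ1, hπ2, ContinuousLinearMap.proj_apply, smul_eq_mul, zero_smul,
      ContinuousLinearMap.zero_apply, zero_mul, add_zero]
    simp [Pi.single_apply]
  have e20 : J 2 0 = 0 := by
    rw [hJ' 2 0, hD]
    simp only [Matrix.cons_val_zero, Matrix.cons_val_one, Matrix.head_cons,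
      Matrix.cons_val_two, Matrix.tail_cons, ContinuousLinearMap.sub_apply,
      ContinuousLinearMap.add_apply, ContinuousLinearMap.smul_apply,
      ContinuousLinearMap.comp_apply, hL02, hL12, ContinuousLinearMap.prod_apply,
      hπ0, hπ1, hπ2, ContinuousLinearMap.proj_apply, smul_eq_mul, zero_smul,
      ContinuousLinearMap.zero_apply, zero_mul, add_zero]
    simp [Pi.single_apply]
  have e21 : J 2 1 = 0 := by
    rw [hJ' 2 1, hD]
    simp only [Matrix.cons_val_zero, Matrix.cons_val_one, Matrix.head_cons,
      Matrix.cons_val_two, Matrix.tail_cons, ContinuousLinearMap.sub_apply,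
      ContinuousLinearMap.add_apply, ContinuousLinearMap.smul_apply,
      ContinuousLinearMap.comp_apply, hL02, hL12, ContinuousLinearMap.prod_apply,
      hπ0, hπ1, hπ2, ContinuousLinearMap.proj_apply, smul_eq_mul, zero_smul,
      ContinuousLinearMap.zero_apply, zero_mul, add_zero]
    simp [Pi.single_apply]
  have e22 : J 2 2 = b2 * h (K, 0) - mu2 := by
    rw [hJ' 2 2, hD]
    simp only [Matrix.cons_val_zero, Matrix.cons_val_one, Matrix.head_cons,
      Matrix.cons_val_two, Matrix.tail_cons, ContinuousLinearMap.sub_apply,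
      ContinuousLinearMap.add_apply, ContinuousLinearMap.smul_apply,
      ContinuousLinearMap.comp_apply, hL02, hL12, ContinuousLinearMap.prod_apply,
      hπ0, hπ1, hπ2, ContinuousLinearMap.proj_apply, smul_eq_mul, zero_smul,
      ContinuousLinearMap.zero_apply, zero_mul, add_zero]
    simp [Pi.single_apply]
  set M := J.map (algebraMap ℝ ℂ) with hM
  have hdet : ∀ z : ℂ, (algebraMap ℂ (Matrix (Fin 3) (Fin 3) ℂ) z - M).det
      = (z - ((-r - gR (K, 0) * delta (0, 0) : ℝ) : ℂ)) * (z - ((-mu1 : ℝ) : ℂ))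
        * (z - ((b2 * h (K, 0) - mu2 : ℝ) : ℂ)) := by
    intro z
    rw [Matrix.det_fin_three]
    simp [hM, Matrix.sub_apply, Matrix.map_apply, Matrix.algebraMap_matrix_apply,
      e00, e10, e11, e12, e20, e21, e22]
  have key : ∀ z : ℂ, z ∈ spectrum ℂ M ↔
      (z = ((-r - gR (K, 0) * delta (0, 0) : ℝ) : ℂ) ∨ z = ((-mu1 : ℝ) : ℂ) ∨
       z = ((b2 * h (K, 0) - mu2 : ℝ) : ℂ)) := by
    intro z
    rw [spectrum.mem_iff, Matrix.isUnit_iff_isUnit_det, isUnit_iff_ne_zero, not_not,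
      hdet z, mul_eq_zero, mul_eq_zero, sub_eq_zero, sub_eq_zero, sub_eq_zero]
    tauto
  constructor
  · ext z
    simp only [Set.mem_insert_iff, Set.mem_singleton_iff]
    exact key z
  · rintro ⟨hge, hlt⟩ z hz
    rcases (key z).1 hz with hzz | hzz | hzz <;> subst hzz <;>
      simp only [Complex.ofReal_re] <;> linarith
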